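/- If A is a polynomial in the coefficients a_0, …, a_n that is homogeneous of degree g and isobaric of weight p, then D(Δ A) − Δ(D A) = ((n·g : ℚ) − 2·p) • A. -/

import Mathlib

open MvPolynomial

/-- The weight function assigning weight `i` to the coefficient variable `aᵢ`. -/
def wt (n : ℕ) : Fin (n + 1) → ℕ := fun i => (i : ℕ)

/-- The lowering operator `D A = Σ_{i=0}^{n-1} (i+1) · aᵢ · ∂A/∂a_{i+1}`. -/
noncomputable def Dop (n : ℕ) (A : MvPolynomial (Fin (n + 1)) ℚ) :
    MvPolynomial (Fin (n + 1)) ℚ :=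
  ∑ i : Fin n, C ((i : ℕ) + 1 : ℚ) * X i.castSucc * pderiv i.succ A

/-- The raising operator `Δ A = Σ_{i=0}^{n-1} (n-i) · a_{i+1} · ∂A/∂aᵢ`. -/
noncomputable def Δop (n : ℕ) (A : MvPolynomial (Fin (n + 1)) ℚ) :
    MvPolynomial (Fin (n + 1)) ℚ :=
  ∑ i : Fin n, C ((n - (i : ℕ) : ℕ) : ℚ) * X i.succ * pderiv i.castSucc A

lemma X_mul_pderiv_monomial {σ : Type*} [DecidableEq σ] (k : σ) (d : σ →₀ ℕ) (c : ℚ) :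
    X k * pderiv k (monomial d c) = monomial d (c * d k) := by
  rw [pderiv_monomial]
  rcases Nat.eq_zero_or_pos (d k) with h | h
  · simp [h]
  · rw [X, monomial_mul, one_mul]
    have hle : Finsupp.single k 1 + (d - Finsupp.single k 1) = d :=
      add_tsub_cancel_of_le (Finsupp.single_le_iff.mpr h)
    rw [hle]

lemma my_pderiv_comm {σ : Type*} [DecidableEq σ] (i j : σ) (A : MvPolynomial σ ℚ) :
    pderiv i (pderiv j A) = pderiv j (pderiv i A) := by
  induction A using MvPolynomial.induction_on' with
  | add p q hp hq => simp only [map_add, hp, hq]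
  | monomial d c =>
    rcases eq_or_ne i j with rfl | hij
    · rfl
    · simp only [pderiv_monomial, Finsupp.tsub_apply, Finsupp.single_eq_of_ne hij,
        Finsupp.single_eq_of_ne (Ne.symm hij), Nat.sub_zero]
      rw [tsub_right_comm, mul_right_comm]

lemma euler {N : ℕ} (w : Fin N → ℕ) {p : ℕ} {A : MvPolynomial (Fin N) ℚ}
    (h : A.IsWeightedHomogeneous w p) :
    ∑ k, C ((w k : ℚ)) * (X k * pderiv k A) = C (p : ℚ) * A := by
  calc ∑ k, C ((w k : ℚ)) * (X k * pderiv k A)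
      = ∑ k, ∑ d ∈ A.support, C ((w k : ℚ)) * (X k * pderiv k (monomial d (coeff d A))) := by
        refine Finset.sum_congr rfl fun k _ => ?_
        conv_lhs => rw [← support_sum_monomial_coeff A]
        rw [map_sum, Finset.mul_sum, Finset.mul_sum]
    _ = ∑ d ∈ A.support, ∑ k, C ((w k : ℚ)) * (X k * pderiv k (monomial d (coeff d A))) :=
        Finset.sum_comm
    _ = ∑ d ∈ A.support, C (p : ℚ) * monomial d (coeff d A) := by
        refine Finset.sum_congr rfl fun d hd => ?_
        have hw : Finsupp.weight w d = p := h (mem_support_iff.mp hd)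
        have hsum : ∑ k, d k * w k = p := by
          rw [← hw, Finsupp.weight_apply, Finsupp.sum_fintype]
          · rfl
          · intro; simp
        calc ∑ k, C ((w k : ℚ)) * (X k * pderiv k (monomial d (coeff d A)))
            = ∑ k, monomial d ((w k : ℚ) * (coeff d A * d k)) := by
              refine Finset.sum_congr rfl fun k _ => ?_
              rw [_root_.X_mul_pderiv_monomial, C_mul_monomial]
          _ = monomial d (∑ k, (w k : ℚ) * (coeff d A * d k)) := by rw [← map_sum]
          _ = C (p : ℚ) * monomial d (coeff d A) := by
              rw [C_mul_monomial]
              congr 1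
              have := congrArg (Nat.cast : ℕ → ℚ) hsum
              push_cast at this
              rw [← this, Finset.sum_mul]
              exact Finset.sum_congr rfl fun k _ => by ring
    _ = C (p : ℚ) * A := by rw [← Finset.mul_sum, support_sum_monomial_coeff]

lemma pderiv_C_mul_X_mul {N : ℕ} (a : ℚ) (j k : Fin N) (B : MvPolynomial (Fin N) ℚ) :
    pderiv j (C a * X k * B)
      = (if k = j then C a * B else 0) + C a * X k * pderiv j B := by
  rw [pderiv_mul, pderiv_mul, pderiv_C]
  rcases eq_or_ne k j with rfl | h
  · simp
  · simp [pderiv_X_of_ne h, h]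

lemma expand_aux (n : ℕ) (A : MvPolynomial (Fin (n+1)) ℚ) (b a : Fin n → ℚ)
    (s t : Fin n → Fin (n+1)) (ht : Function.Injective t) :
    ∑ j : Fin n, C (b j) * X (s j) * pderiv (t j)
        (∑ i : Fin n, C (a i) * X (t i) * pderiv (s i) A)
      = (∑ j : Fin n, (C (b j) * C (a j)) * (X (s j) * pderiv (s j) A))
        + ∑ j : Fin n, ∑ i : Fin n,
            (C (b j) * C (a i)) * (X (s j) * (X (t i) * pderiv (t j) (pderiv (s i) A))) := by
  rw [← Finset.sum_add_distrib]
  refine Finset.sum_congr rfl fun j _ => ?_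
  rw [map_sum, Finset.mul_sum]
  have key : ∀ i : Fin n,
      C (b j) * X (s j) * pderiv (t j) (C (a i) * X (t i) * pderiv (s i) A)
        = (if i = j then (C (b j) * C (a j)) * (X (s j) * pderiv (s j) A) else 0)
          + (C (b j) * C (a i)) * (X (s j) * (X (t i) * pderiv (t j) (pderiv (s i) A))) := by
    intro i
    rw [pderiv_C_mul_X_mul, mul_add]
    congr 1
    · rcases eq_or_ne i j with rfl | h
      · rw [if_pos rfl, if_pos rfl]; ring
      · rw [if_neg (fun hh => h (ht hh)), if_neg h, mul_zero]
    · ring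
  rw [Finset.sum_congr rfl fun i _ => key i, Finset.sum_add_distrib,
    Finset.sum_ite_eq' Finset.univ j _, if_pos (Finset.mem_univ j)]

/-- If `A` is homogeneous of degree `g` and isobaric of weight `p`, then
`D(Δ A) − Δ(D A) = (n·g − 2·p) • A`. -/
theorem Dop_Δop_comm (n g p : ℕ) (A : MvPolynomial (Fin (n + 1)) ℚ)
    (hg : A.IsHomogeneous g) (hp : A.IsWeightedHomogeneous (wt n) p) :
    Dop n (Δop n A) - Δop n (Dop n A) = (((n * g : ℕ) : ℚ) - 2 * (p : ℚ)) • A := by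
  have h1 := expand_aux n A (fun j => ((j : ℕ) + 1 : ℚ)) (fun i => ((n - (i : ℕ) : ℕ) : ℚ))
      Fin.castSucc Fin.succ (Fin.succ_injective n)
  have h2 := expand_aux n A (fun j => ((n - (j : ℕ) : ℕ) : ℚ)) (fun i => ((i : ℕ) + 1 : ℚ))
      Fin.succ Fin.castSucc (Fin.castSucc_injective n)
  have hcross :
      (∑ j : Fin n, ∑ i : Fin n,
          (C ((n - (j : ℕ) : ℕ) : ℚ) * C ((i : ℕ) + 1 : ℚ)) *
            (X j.succ * (X i.castSucc * pderiv j.castSucc (pderiv i.succ A))))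
        = ∑ j : Fin n, ∑ i : Fin n,
            (C ((j : ℕ) + 1 : ℚ) * C ((n - (i : ℕ) : ℕ) : ℚ)) *
              (X j.castSucc * (X i.succ * pderiv j.succ (pderiv i.castSucc A))) := by
    rw [Finset.sum_comm]
    refine Finset.sum_congr rfl fun j _ => Finset.sum_congr rfl fun i _ => ?_
    rw [my_pderiv_comm]
    ring
  have hLHS : Dop n (Δop n A) - Δop n (Dop n A)
      = (∑ j : Fin n,
          (C ((j : ℕ) + 1 : ℚ) * C ((n - (j : ℕ) : ℕ) : ℚ)) * (X j.castSucc * pderiv j.castSucc A))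
        - ∑ j : Fin n,
            (C ((n - (j : ℕ) : ℕ) : ℚ) * C ((j : ℕ) + 1 : ℚ)) * (X j.succ * pderiv j.succ A) := by
    unfold Dop Δop
    rw [h1, h2, hcross]
    ring
  -- repackage the two diagonal sums as sums over Fin (n+1)
  set u : Fin (n + 1) → MvPolynomial (Fin (n + 1)) ℚ := fun k => X k * pderiv k A with hu
  have hsub : ∀ j : Fin n, ((n - (j : ℕ) : ℕ) : ℚ) = (n : ℚ) - (j : ℕ) := fun j =>
    Nat.cast_sub j.isLt.le
  have hd1 : (∑ j : Fin n,
        (C ((j : ℕ) + 1 : ℚ) * C ((n - (j : ℕ) : ℕ) : ℚ)) * (X j.castSucc * pderiv j.castSucc A))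
      = ∑ k : Fin (n + 1), C ((((k : ℕ) : ℚ) + 1) * ((n : ℚ) - ((k : ℕ) : ℚ))) * u k := by
    rw [Fin.sum_univ_castSucc]
    simp only [Fin.val_last, sub_self, mul_zero, map_zero, zero_mul, add_zero]
    refine Finset.sum_congr rfl fun j _ => ?_
    rw [hsub j, ← map_mul, hu]
    simp [Fin.coe_castSucc]
  have hd2 : (∑ j : Fin n,
        (C ((n - (j : ℕ) : ℕ) : ℚ) * C ((j : ℕ) + 1 : ℚ)) * (X j.succ * pderiv j.succ A))
      = ∑ k : Fin (n + 1), C (((k : ℕ) : ℚ) * ((n : ℚ) - ((k : ℕ) : ℚ) + 1)) * u k := by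
    rw [Fin.sum_univ_succ]
    simp only [Fin.val_zero, Nat.cast_zero, zero_mul, map_zero, zero_add]
    refine Finset.sum_congr rfl fun j _ => ?_
    rw [hsub j, ← map_mul]
    simp only [hu]
    congr 1
    simp only [Fin.val_succ]
    push_cast
    ring_nf
  have heuler1 : ∑ k : Fin (n + 1), u k = C (g : ℚ) * A := by
    have := euler (fun _ : Fin (n + 1) => 1) hg
    simpa using this
  have heuler2 : ∑ k : Fin (n + 1), C (((k : ℕ) : ℚ)) * u k = C (p : ℚ) * A :=
    euler (wt n) hp
  rw [hLHS, hd1, hd2, ← Finset.sum_sub_distrib]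
  have hstep : ∀ k : Fin (n + 1),
      C ((((k : ℕ) : ℚ) + 1) * ((n : ℚ) - ((k : ℕ) : ℚ))) * u k
        - C (((k : ℕ) : ℚ) * ((n : ℚ) - ((k : ℕ) : ℚ) + 1)) * u k
      = C (n : ℚ) * u k - C 2 * (C (((k : ℕ) : ℚ)) * u k) := by
    intro k
    have : ((((k : ℕ) : ℚ) + 1) * ((n : ℚ) - ((k : ℕ) : ℚ)))
        = (((k : ℕ) : ℚ) * ((n : ℚ) - ((k : ℕ) : ℚ) + 1)) + ((n : ℚ) - 2 * ((k : ℕ) : ℚ)) := by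
      ring
    rw [this, map_add, map_sub, map_mul C (2 : ℚ) (((k : ℕ) : ℚ))]
    ring
  rw [Finset.sum_congr rfl fun k _ => hstep k, Finset.sum_sub_distrib, ← Finset.mul_sum,
    ← Finset.mul_sum, heuler1, heuler2, smul_eq_C_mul]
  rw [Nat.cast_mul, map_sub, map_mul C ((n : ℕ) : ℚ) ((g : ℕ) : ℚ),
    map_mul C (2 : ℚ) ((p : ℕ) : ℚ)]
  ring
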